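/- For the mixture family with τ > 0: for every x^n ∈ 𝒳^n, every z ∈ ℝ^K and all θ₁, θ₂ ∈ Θ_τ, z^T Ĵ(θ₁; x^n) z ≤ e^{2√K|θ₁−θ₂|/τ} · z^T Ĵ(θ₂; x^n) z. In particular: (i) if |θ₁ − θ₂| ≤ τ/(2√K) then z^T Ĵ(θ₁;x^n) z ≤ (1 + (2e√K/τ)|θ₁−θ₂|)·z^T Ĵ(θ₂;x^n) z; and (ii) for any ε > 0, if |θ₁ − θ₂| < ε then z^T Ĵ(θ₁;x^n) z ≤ C_ε · z^T Ĵ(θ₂;x^n) z with C_ε = e^{2√K ε/τ}. -/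

import Mathlib

open MeasureTheory Matrix

noncomputable section

/-- Euclidean norm on `Fin K → ℝ`. -/
def euclNorm {K : ℕ} (v : Fin K → ℝ) : ℝ := Real.sqrt (∑ i, (v i) ^ 2)

/-- The mixture density `p_θ = θ₀ q₀ + Σ_{i=1}^K θᵢ qᵢ`, where `θ₀ = 1 − Σᵢ θᵢ`. -/
def mixP {K : ℕ} {X : Type*} (q : Fin (K + 1) → X → ℝ) (θ : Fin K → ℝ) (x : X) : ℝ :=
  (1 - ∑ i, θ i) * q 0 x + ∑ i : Fin K, θ i * q i.succ x

/-- The restricted parameter set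
`Θ_τ = {θ ∈ [0,1]^K : θᵢ ≥ τ for all i ∈ {0,…,K}}` (with `θ₀ = 1 − Σᵢ θᵢ`). -/
def ThetaTau (K : ℕ) (τ : ℝ) : Set (Fin K → ℝ) :=
  {θ | (∀ i, 0 ≤ θ i ∧ θ i ≤ 1) ∧ (∀ i, τ ≤ θ i) ∧ τ ≤ 1 - ∑ i, θ i}

/-- Empirical Fisher information of the mixture family (one observation):
`Ĵ_{ij}(θ;x) = (qᵢ(x)−q₀(x))(q_j(x)−q₀(x))/p_θ(x)²`. -/
def mixJhat1 {K : ℕ} {X : Type*} (q : Fin (K + 1) → X → ℝ) (θ : Fin K → ℝ) (x : X) :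
    Matrix (Fin K) (Fin K) ℝ :=
  Matrix.of fun i j => (q i.succ x - q 0 x) * (q j.succ x - q 0 x) / (mixP q θ x) ^ 2

/-- Empirical Fisher information of the mixture family for a sample `x^n`. -/
def mixJhatN {K : ℕ} {X : Type*} (q : Fin (K + 1) → X → ℝ) {n : ℕ} (θ : Fin K → ℝ)
    (xn : Fin n → X) : Matrix (Fin K) (Fin K) ℝ :=
  (n : ℝ)⁻¹ • ∑ t, mixJhat1 q θ (xn t)

/-- Fisher information of the mixture family: `J(θ) = E_{p_θ}[Ĵ(θ;X)]`. -/
def mixJ {K : ℕ} {X : Type*} [MeasurableSpace X] (μ : Measure X)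
    (q : Fin (K + 1) → X → ℝ) (θ : Fin K → ℝ) : Matrix (Fin K) (Fin K) ℝ :=
  Matrix.of fun i j => ∫ x, mixP q θ x * mixJhat1 q θ x i j ∂μ

lemma quadform1 {K : ℕ} {X : Type*} (q : Fin (K + 1) → X → ℝ) (θ : Fin K → ℝ) (x : X)
    (z : Fin K → ℝ) :
    z ⬝ᵥ (mixJhat1 q θ x).mulVec z
      = (∑ i, z i * (q i.succ x - q 0 x)) ^ 2 / (mixP q θ x) ^ 2 := by
  simp only [dotProduct, mulVec, mixJhat1, Matrix.of_apply]
  rw [sq (∑ i, z i * (q i.succ x - q 0 x)), Finset.sum_mul_sum, Finset.sum_div]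
  refine Finset.sum_congr rfl fun i _ => ?_
  rw [Finset.sum_div, Finset.mul_sum]
  refine Finset.sum_congr rfl fun j _ => ?_
  ring

lemma quadformN {K : ℕ} {X : Type*} (q : Fin (K + 1) → X → ℝ) {n : ℕ} (θ : Fin K → ℝ)
    (xn : Fin n → X) (z : Fin K → ℝ) :
    z ⬝ᵥ (mixJhatN q θ xn).mulVec z
      = (n : ℝ)⁻¹ * ∑ t, z ⬝ᵥ (mixJhat1 q θ (xn t)).mulVec z := by
  simp only [mixJhatN, Matrix.smul_mulVec, dotProduct_smul, smul_eq_mul]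
  congr 1
  simp only [dotProduct, mulVec, Matrix.sum_apply, Finset.sum_apply, Finset.mul_sum,
    Finset.sum_mul]
  exact (Finset.sum_congr rfl fun i _ => Finset.sum_comm).trans Finset.sum_comm

lemma euclNorm_nonneg {K : ℕ} (v : Fin K → ℝ) : 0 ≤ euclNorm v := Real.sqrt_nonneg _

lemma euclNorm_sub_comm {K : ℕ} (a b : Fin K → ℝ) : euclNorm (a - b) = euclNorm (b - a) := by
  unfold euclNorm
  congr 1
  exact Finset.sum_congr rfl fun i _ => by simp [Pi.sub_apply]; ring

lemma abs_coord_le {K : ℕ} (v : Fin K → ℝ) (i : Fin K) : |v i| ≤ euclNorm v := by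
  rw [← Real.sqrt_sq_eq_abs]
  exact Real.sqrt_le_sqrt (Finset.single_le_sum (f := fun j => v j ^ 2)
    (fun j _ => sq_nonneg _) (Finset.mem_univ i))

lemma abs_sum_le' {K : ℕ} (v : Fin K → ℝ) : |∑ i, v i| ≤ Real.sqrt K * euclNorm v := by
  unfold euclNorm
  rw [← Real.sqrt_sq_eq_abs, ← Real.sqrt_mul (Nat.cast_nonneg K)]
  apply Real.sqrt_le_sqrt
  have := sq_sum_le_card_mul_sum_sq (s := Finset.univ) (f := v)
  simpa using this

lemma mixP_nonneg {K : ℕ} {X : Type*} (q : Fin (K + 1) → X → ℝ)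
    (hq : ∀ i x, 0 ≤ q i x) {τ : ℝ} (hτ : 0 < τ) {θ : Fin K → ℝ}
    (hθ : θ ∈ ThetaTau K τ) (x : X) : 0 ≤ mixP q θ x := by
  obtain ⟨h01, hlow, h0⟩ := hθ
  refine add_nonneg (mul_nonneg (by linarith) (hq 0 x)) ?_
  exact Finset.sum_nonneg fun i _ => mul_nonneg (h01 i).1 (hq _ x)

lemma mixP_ratio {K : ℕ} {X : Type*} (q : Fin (K + 1) → X → ℝ)
    (hq : ∀ i x, 0 ≤ q i x) {τ : ℝ} (hτ : 0 < τ) {θ₁ θ₂ : Fin K → ℝ}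
    (h₁ : θ₁ ∈ ThetaTau K τ) (h₂ : θ₂ ∈ ThetaTau K τ) (x : X) :
    mixP q θ₂ x ≤ Real.exp (Real.sqrt K * euclNorm (θ₁ - θ₂) / τ) * mixP q θ₁ x := by
  set E := euclNorm (θ₁ - θ₂) with hE
  set c := Real.sqrt K * E / τ with hc
  have hEnn : 0 ≤ E := euclNorm_nonneg _
  have hcnn : 0 ≤ c := div_nonneg (mul_nonneg (Real.sqrt_nonneg _) hEnn) hτ.le
  have key : ∀ a b : ℝ, τ ≤ a → |b - a| ≤ Real.sqrt K * E → b ≤ Real.exp c * a := by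
    intro a b ha hab
    have h1 : b ≤ a + Real.sqrt K * E := by
      have := abs_le.1 hab
      linarith [this.2]
    have h2 : Real.sqrt K * E = τ * c := by
      rw [hc]; field_simp
    have h3 : τ * c ≤ a * c := mul_le_mul_of_nonneg_right ha hcnn
    have h4 : a * (1 + c) ≤ a * Real.exp c :=
      mul_le_mul_of_nonneg_left (by linarith [Real.add_one_le_exp c]) (by linarith)
    nlinarith
  obtain ⟨h01₁, hlow₁, h0₁⟩ := h₁
  obtain ⟨h01₂, hlow₂, h0₂⟩ := h₂
  have hbd : ∀ i : Fin K, |θ₂ i - θ₁ i| ≤ Real.sqrt K * E := by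
    intro i
    have hK1 : (1:ℝ) ≤ Real.sqrt K := by
      rw [Real.one_le_sqrt]
      exact_mod_cast i.pos
    calc |θ₂ i - θ₁ i| = |(θ₁ - θ₂) i| := by rw [Pi.sub_apply, abs_sub_comm]
      _ ≤ E := abs_coord_le _ i
      _ ≤ Real.sqrt K * E := le_mul_of_one_le_left hEnn hK1
  have hbd0 : |(1 - ∑ i, θ₂ i) - (1 - ∑ i, θ₁ i)| ≤ Real.sqrt K * E := by
    have : (1 - ∑ i, θ₂ i) - (1 - ∑ i, θ₁ i) = ∑ i, (θ₁ - θ₂) i := by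
      simp [Pi.sub_apply, Finset.sum_sub_distrib]
    rw [this]
    exact abs_sum_le' _
  unfold mixP
  rw [mul_add, Finset.mul_sum]
  refine add_le_add ?_ (Finset.sum_le_sum fun i _ => ?_)
  · rw [← mul_assoc]
    exact mul_le_mul_of_nonneg_right (key _ _ h0₁ hbd0) (hq 0 x)
  · rw [← mul_assoc]
    exact mul_le_mul_of_nonneg_right (key _ _ (hlow₁ i) (hbd i)) (hq _ x)

lemma pointwise_bound {K : ℕ} {X : Type*} (q : Fin (K + 1) → X → ℝ)
    (hq : ∀ i x, 0 ≤ q i x) {τ : ℝ} (hτ : 0 < τ) {θ₁ θ₂ : Fin K → ℝ}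
    (h₁ : θ₁ ∈ ThetaTau K τ) (h₂ : θ₂ ∈ ThetaTau K τ) (x : X) (z : Fin K → ℝ) :
    z ⬝ᵥ (mixJhat1 q θ₁ x).mulVec z
      ≤ Real.exp (2 * Real.sqrt K * euclNorm (θ₁ - θ₂) / τ) *
        (z ⬝ᵥ (mixJhat1 q θ₂ x).mulVec z) := by
  set E := euclNorm (θ₁ - θ₂) with hE
  set c := Real.sqrt K * E / τ with hc
  have hexp2 : Real.exp c ^ 2 = Real.exp (2 * Real.sqrt K * E / τ) := by
    rw [sq, ← Real.exp_add]
    rw [hc]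
    field_simp
    ring
  have h12 : mixP q θ₂ x ≤ Real.exp c * mixP q θ₁ x := mixP_ratio q hq hτ h₁ h₂ x
  have h21 : mixP q θ₁ x ≤ Real.exp c * mixP q θ₂ x := by
    have := mixP_ratio q hq hτ h₂ h₁ x
    rwa [euclNorm_sub_comm, ← hE, ← hc] at this
  have hp1 : 0 ≤ mixP q θ₁ x := mixP_nonneg q hq hτ h₁ x
  have hp2 : 0 ≤ mixP q θ₂ x := mixP_nonneg q hq hτ h₂ x
  rw [quadform1, quadform1]
  set S := ∑ i, z i * (q i.succ x - q 0 x)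
  rcases eq_or_lt_of_le hp2 with hz | hpos
  · have hz1 : mixP q θ₁ x = 0 := by nlinarith [Real.exp_pos c]
    rw [← hz, hz1]
    simp
  · have hpos1 : 0 < mixP q θ₁ x := by nlinarith [Real.exp_pos c]
    rw [mul_div_assoc' (Real.exp (2 * Real.sqrt K * E / τ)) (S ^ 2),
      div_le_div_iff₀ (by positivity) (by positivity)]
    calc S ^ 2 * mixP q θ₂ x ^ 2 ≤ S ^ 2 * (Real.exp c ^ 2 * mixP q θ₁ x ^ 2) := by
          apply mul_le_mul_of_nonneg_left _ (sq_nonneg S)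
          rw [← mul_pow]
          exact pow_le_pow_left₀ hp2 h12 2
      _ = Real.exp (2 * Real.sqrt K * E / τ) * S ^ 2 * mixP q θ₁ x ^ 2 := by
          rw [← hexp2]; ring

lemma quad_nonneg {K : ℕ} {X : Type*} (q : Fin (K + 1) → X → ℝ) {n : ℕ} (θ : Fin K → ℝ)
    (xn : Fin n → X) (z : Fin K → ℝ) :
    0 ≤ z ⬝ᵥ (mixJhatN q θ xn).mulVec z := by
  rw [quadformN]
  refine mul_nonneg (by positivity) (Finset.sum_nonneg fun t _ => ?_)
  rw [quadform1]
  positivity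

lemma main_bound {K : ℕ} {X : Type*} (q : Fin (K + 1) → X → ℝ)
    (hq : ∀ i x, 0 ≤ q i x) {τ : ℝ} (hτ : 0 < τ) {θ₁ θ₂ : Fin K → ℝ}
    (h₁ : θ₁ ∈ ThetaTau K τ) (h₂ : θ₂ ∈ ThetaTau K τ) {n : ℕ} (xn : Fin n → X)
    (z : Fin K → ℝ) :
    z ⬝ᵥ (mixJhatN q θ₁ xn).mulVec z
      ≤ Real.exp (2 * Real.sqrt K * euclNorm (θ₁ - θ₂) / τ) *
        (z ⬝ᵥ (mixJhatN q θ₂ xn).mulVec z) := by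
  rw [quadformN, quadformN, mul_left_comm]
  refine mul_le_mul_of_nonneg_left ?_ (by positivity)
  rw [Finset.mul_sum]
  exact Finset.sum_le_sum fun t _ => pointwise_bound q hq hτ h₁ h₂ (xn t) z

/-- **Lemma 9 (empirical Fisher ratio bounds for mixture families).**
For the mixture family with `τ > 0`: for every sample `x^n`, every `z` and all
`θ₁, θ₂ ∈ Θ_τ`, `zᵀ Ĵ(θ₁;x^n) z ≤ e^{2√K|θ₁−θ₂|/τ} · zᵀ Ĵ(θ₂;x^n) z`.
In particular: (i) if `|θ₁−θ₂| ≤ τ/(2√K)` then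
`zᵀ Ĵ(θ₁;x^n) z ≤ (1 + (2e√K/τ)|θ₁−θ₂|)·zᵀ Ĵ(θ₂;x^n) z`; and (ii) for any `ε > 0`,
if `|θ₁−θ₂| < ε` then `zᵀ Ĵ(θ₁;x^n) z ≤ e^{2√K ε/τ} · zᵀ Ĵ(θ₂;x^n) z`. -/
theorem stmt16 {K : ℕ} {X : Type*} (q : Fin (K + 1) → X → ℝ)
    (hq_nonneg : ∀ i x, 0 ≤ q i x)
    (τ : ℝ) (hτ : 0 < τ) (hτ' : τ ≤ 1 / (K + 1)) :
    ∀ (n : ℕ) (xn : Fin n → X) (z : Fin K → ℝ),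
      ∀ θ₁ ∈ ThetaTau K τ, ∀ θ₂ ∈ ThetaTau K τ,
        (z ⬝ᵥ (mixJhatN q θ₁ xn).mulVec z
          ≤ Real.exp (2 * Real.sqrt K * euclNorm (θ₁ - θ₂) / τ) *
            (z ⬝ᵥ (mixJhatN q θ₂ xn).mulVec z))
        ∧ (euclNorm (θ₁ - θ₂) ≤ τ / (2 * Real.sqrt K) →
            z ⬝ᵥ (mixJhatN q θ₁ xn).mulVec z
              ≤ (1 + (2 * Real.exp 1 * Real.sqrt K / τ) * euclNorm (θ₁ - θ₂)) *
                (z ⬝ᵥ (mixJhatN q θ₂ xn).mulVec z))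
        ∧ (∀ ε : ℝ, 0 < ε → euclNorm (θ₁ - θ₂) < ε →
            z ⬝ᵥ (mixJhatN q θ₁ xn).mulVec z
              ≤ Real.exp (2 * Real.sqrt K * ε / τ) *
                (z ⬝ᵥ (mixJhatN q θ₂ xn).mulVec z)) := by
  intro n xn z θ₁ h₁ θ₂ h₂
  have hmain := main_bound q hq_nonneg hτ h₁ h₂ xn z
  have hJ2 : 0 ≤ z ⬝ᵥ (mixJhatN q θ₂ xn).mulVec z := quad_nonneg q θ₂ xn z
  set E := euclNorm (θ₁ - θ₂) with hE
  have hEnn : 0 ≤ E := euclNorm_nonneg _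
  have hxnn : 0 ≤ 2 * Real.sqrt K * E / τ :=
    div_nonneg (mul_nonneg (by positivity) hEnn) hτ.le
  refine ⟨hmain, ?_, ?_⟩
  · intro hsmall
    have hx1 : 2 * Real.sqrt K * E / τ ≤ 1 := by
      rcases Nat.eq_zero_or_pos K with hK | hK
      · simp [hK]
      · have hKpos : 0 < Real.sqrt K := Real.sqrt_pos.2 (by exact_mod_cast hK)
        rw [div_le_one hτ]
        rw [le_div_iff₀ (by positivity)] at hsmall
        linarith
    set x := 2 * Real.sqrt K * E / τ with hx
    have hconv : Real.exp x ≤ 1 + Real.exp 1 * x := by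
      have h := convexOn_exp.2 (Set.mem_univ (0:ℝ)) (Set.mem_univ (1:ℝ))
        (by linarith : (0:ℝ) ≤ 1 - x) hxnn (by ring)
      simp only [smul_eq_mul, mul_zero, mul_one, zero_add, Real.exp_zero] at h
      nlinarith
    have hco : 1 + Real.exp 1 * x = 1 + (2 * Real.exp 1 * Real.sqrt K / τ) * E := by
      rw [hx]; field_simp
    calc z ⬝ᵥ (mixJhatN q θ₁ xn).mulVec z
        ≤ Real.exp x * (z ⬝ᵥ (mixJhatN q θ₂ xn).mulVec z) := hmain
      _ ≤ (1 + Real.exp 1 * x) * (z ⬝ᵥ (mixJhatN q θ₂ xn).mulVec z) :=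
          mul_le_mul_of_nonneg_right hconv hJ2
      _ = _ := by rw [hco]
  · intro ε hε hlt
    refine hmain.trans (mul_le_mul_of_nonneg_right ?_ hJ2)
    apply Real.exp_le_exp.2
    gcongr
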